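/- Let r > 0 and Ω a closed convex subset of a real Hilbert space, x ∈ ∂Ω, y ∈ Ω with ‖x−y‖ ≤ 2r. If every short arc of radius r joining x and y is contained in Ω, then y ∈ B̄(x − r·v, r) for every unit normal v to Ω at x. -/

import Mathlib

open Metric Set Filter
open scoped InnerProductSpace ENNReal Topology

variable {X : Type*} [NormedAddCommGroup X] [InnerProductSpace ℝ X] [CompleteSpace X]

/-- The "lens" of `x` and `y`: the intersection of all closed balls of radius `r`
containing both `x` and `y` (equal to the whole space if no such ball exists). -/
def lens (r : ℝ) (x y : X) : Set X :=
  ⋂ c ∈ {c : X | x ∈ closedBall c r ∧ y ∈ closedBall c r}, closedBall c r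

/-- A set `Ω` is `r`-convex if for all `x, y ∈ Ω` the lens of `x` and `y` is contained in `Ω`. -/
def IsRConvex (r : ℝ) (Ω : Set X) : Prop :=
  ∀ x ∈ Ω, ∀ y ∈ Ω, lens r x y ⊆ Ω

/-- `A` is a short arc of radius `r` joining `x` and `y`: either `x = y` and `A = {x}`,
or `x ≠ y` and `A` is the not-longer closed arc of a circle of radius `r`
(lying in a two-dimensional plane through its center `c`) through `x` and `y`.
The not-longer arc is characterized as `{z on the circle | ⟪v, z - c⟫ ≥ ⟪v, x - c⟫}`
for a nonzero vector `v` of the plane orthogonal to `x - y` with `⟪v, x - c⟫ ≥ 0`. -/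
def IsShortArc (r : ℝ) (x y : X) (A : Set X) : Prop :=
  (x = y ∧ A = {x}) ∨
  (x ≠ y ∧ ∃ (c v : X) (P : Submodule ℝ X), Module.finrank ℝ P = 2 ∧
    x - c ∈ P ∧ y - c ∈ P ∧ v ∈ P ∧ v ≠ 0 ∧
    ⟪v, x - y⟫_ℝ = 0 ∧ 0 ≤ ⟪v, x - c⟫_ℝ ∧
    ‖x - c‖ = r ∧ ‖y - c‖ = r ∧
    A = {z : X | z - c ∈ P ∧ ‖z - c‖ = r ∧ ⟪v, x - c⟫_ℝ ≤ ⟪v, z - c⟫_ℝ})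

/-- `Ω` possesses the arc property for radius `r` if every short arc of radius `r`
joining two points of `Ω` is contained in `Ω`. -/
def ArcProperty (r : ℝ) (Ω : Set X) : Prop :=
  ∀ x ∈ Ω, ∀ y ∈ Ω, ∀ A : Set X, IsShortArc r x y A → A ⊆ Ω

set_option maxHeartbeats 1000000

lemma aux_finrank_span_pair (u w : X) (hu : ‖u‖ = 1) (hw : ‖w‖ = 1) (huw : ⟪u,w⟫_ℝ = 0) :
    Module.finrank ℝ (Submodule.span ℝ ({u, w} : Set X)) = 2 := by
  have hwu : ⟪w, u⟫_ℝ = 0 := by rw [real_inner_comm]; exact huw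
  have hli : LinearIndependent ℝ ![u, w] := by
    rw [LinearIndependent.pair_iff]
    intro s t hst
    have h1 : ⟪u, s • u + t • w⟫_ℝ = s := by
      simp [inner_add_right, inner_smul_right, huw, real_inner_self_eq_norm_sq, hu]
    have h2 : ⟪w, s • u + t • w⟫_ℝ = t := by
      simp [inner_add_right, inner_smul_right, hwu, real_inner_self_eq_norm_sq, hw]
    rw [hst, inner_zero_right] at h1 h2
    exact ⟨h1.symm, h2.symm⟩
  have hc := finrank_span_eq_card hli
  have hrng : Set.range ![u, w] = ({u, w} : Set X) := by
    simp [Matrix.range_cons, Matrix.range_empty, Set.pair_comm]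
  rw [hrng] at hc
  simpa using hc

lemma aux_exists_orth (u : X) (hdim : 2 ≤ Module.rank ℝ X) :
    ∃ w : X, ‖w‖ = 1 ∧ ⟪u, w⟫_ℝ = 0 := by
  have : (ℝ ∙ u)ᗮ ≠ ⊥ := by
    intro hbot
    have htop : (ℝ ∙ u) = ⊤ := by
      have := Submodule.sup_orthogonal_of_hasOrthogonalProjection (K := ℝ ∙ u)
      rw [hbot, sup_bot_eq] at this
      exact this
    have h1 : Module.rank ℝ X ≤ 1 := by
      rw [← rank_top ℝ X, ← htop]
      exact (rank_span_le _).trans (by simp)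
    exact absurd (hdim.trans h1) (by norm_num)
  obtain ⟨w, hwmem, hw0⟩ := Submodule.exists_mem_ne_zero_of_ne_bot this
  refine ⟨‖w‖⁻¹ • w, ?_, ?_⟩
  · simp [norm_smul, inv_mul_cancel₀ (norm_ne_zero_iff.2 hw0)]
  · have := (Submodule.mem_orthogonal _ w).1 hwmem u (Submodule.mem_span_singleton_self u)
    simp [inner_smul_right, this]

lemma aux_eq_of_sq {a b : ℝ} (ha : 0 ≤ a) (hb : 0 ≤ b) (h : a ^ 2 = b ^ 2) : a = b := by
  nlinarith

/-- decomposition of a unit vector along an orthonormal pair -/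
lemma aux_decomp (hdim : 2 ≤ Module.rank ℝ X) (u v : X) (hu : ‖u‖ = 1) (hv : ‖v‖ = 1) :
    ∃ (w : X) (β : ℝ), ‖w‖ = 1 ∧ ⟪u, w⟫_ℝ = 0 ∧ 0 ≤ β ∧ v = ⟪v, u⟫_ℝ • u + β • w := by
  set α : ℝ := ⟪v, u⟫_ℝ with hα_def
  rcases eq_or_ne (v - α • u) 0 with hp | hp
  · obtain ⟨w, hw1, hw2⟩ := aux_exists_orth u hdim
    exact ⟨w, 0, hw1, hw2, le_refl 0, by rw [zero_smul, add_zero]; rwa [sub_eq_zero] at hp⟩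
  · have hup : ⟪u, v - α • u⟫_ℝ = 0 := by
      rw [inner_sub_right, inner_smul_right, real_inner_self_eq_norm_sq, hu, real_inner_comm]
      ring
    have hnp : 0 < ‖v - α • u‖ := norm_pos_iff.2 hp
    refine ⟨‖v - α • u‖⁻¹ • (v - α • u), ‖v - α • u‖, ?_, ?_, hnp.le, ?_⟩
    · rw [norm_smul, Real.norm_eq_abs, abs_of_pos (inv_pos.2 hnp), inv_mul_cancel₀ hnp.ne']
    · rw [inner_smul_right, hup, mul_zero]
    · rw [smul_smul, mul_inv_cancel₀ hnp.ne', one_smul]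
      abel

/-- If `Ω` is closed and convex, `x ∈ ∂Ω`, `y ∈ Ω` with `‖x - y‖ ≤ 2r`, and every short
arc of radius `r` joining `x` and `y` is contained in `Ω`, then `y ∈ B̄(x - r·v, r)`
for every unit normal `v` to `Ω` at `x`. -/
theorem mem_closedBall_of_arcProperty_pair (hdim : 2 ≤ Module.rank ℝ X) {r : ℝ}
    (hr : 0 < r) {Ω : Set X} (hcl : IsClosed Ω) (hconv : Convex ℝ Ω) {x y : X}
    (hx : x ∈ frontier Ω) (hy : y ∈ Ω) (hxy : ‖x - y‖ ≤ 2 * r)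
    (harc : ∀ A : Set X, IsShortArc r x y A → A ⊆ Ω)
    (v : X) (hv : ‖v‖ = 1) (hnormal : ∀ z ∈ Ω, ⟪v, z - x⟫_ℝ ≤ 0) :
    y ∈ closedBall (x - r • v) r := by
  rcases eq_or_ne x y with hxyeq | hxyne
  · subst hxyeq
    simp only [mem_closedBall, dist_eq_norm]
    have h1 : x - (x - r • v) = r • v := by abel
    rw [h1, norm_smul, Real.norm_eq_abs, hv, abs_of_pos hr, mul_one]
  -- setup: d, u
  obtain ⟨d, hd_def⟩ : ∃ d : ℝ, d = ‖x - y‖ := ⟨_, rfl⟩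
  have hd : 0 < d := by rw [hd_def, norm_pos_iff]; exact sub_ne_zero.2 hxyne
  have hd2r : d ≤ 2 * r := hd_def ▸ hxy
  obtain ⟨u, hu, hdu⟩ : ∃ u : X, ‖u‖ = 1 ∧ d • u = x - y := by
    refine ⟨d⁻¹ • (x - y), ?_, ?_⟩
    · rw [norm_smul, Real.norm_eq_abs, abs_of_pos (inv_pos.2 hd), ← hd_def,
        inv_mul_cancel₀ hd.ne']
    · rw [smul_smul, mul_inv_cancel₀ hd.ne', one_smul]
  obtain ⟨w, β, hw, huw, hβ0, hdecomp⟩ := aux_decomp hdim u v hu hv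
  obtain ⟨α, hα_def⟩ : ∃ a : ℝ, a = ⟪v, u⟫_ℝ := ⟨_, rfl⟩
  rw [← hα_def] at hdecomp
  have hwu : ⟪w, u⟫_ℝ = 0 := by rw [real_inner_comm]; exact huw
  have hvu : ⟪v, u⟫_ℝ = α := hα_def.symm
  have hvw : ⟪v, w⟫_ℝ = β := by
    rw [hdecomp, inner_add_left, real_inner_smul_left, real_inner_smul_left, huw,
      real_inner_self_eq_norm_sq, hw]
    ring
  have hwv : ⟪w, v⟫_ℝ = β := by rw [real_inner_comm]; exact hvw
  have hαβ : α ^ 2 + β ^ 2 = 1 := by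
    have h1 : ⟪v, v⟫_ℝ = α * α + β * β := by
      nth_rewrite 2 [hdecomp]
      rw [inner_add_right, inner_smul_right, inner_smul_right, hvu, hvw]
    rw [real_inner_self_eq_norm_sq, hv] at h1
    nlinarith [h1]
  have hα0 : 0 ≤ α := by
    have h1 := hnormal y hy
    have h2 : y - x = (-d) • u := by rw [neg_smul, hdu, neg_sub]
    rw [h2, inner_smul_right, hvu] at h1
    nlinarith
  obtain ⟨h, hh0, hhsq⟩ : ∃ h : ℝ, 0 ≤ h ∧ h ^ 2 = r ^ 2 - d ^ 2 / 4 := by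
    refine ⟨Real.sqrt (r ^ 2 - d ^ 2 / 4), Real.sqrt_nonneg _, Real.sq_sqrt ?_⟩
    nlinarith
  -- norm helper
  have hnorm_combo : ∀ a b : ℝ, ‖a • u + b • w‖ ^ 2 = a ^ 2 + b ^ 2 := by
    intro a b
    rw [norm_add_sq_real, norm_smul, norm_smul, real_inner_smul_left, real_inner_smul_right,
      huw, hu, hw]
    simp [Real.norm_eq_abs, sq_abs]
  -- key inequality: d ≤ 2 * r * α
  have key : d ≤ 2 * r * α := by
    rcases lt_or_ge (r * β) h with hcase | hcase
    · have hpos : 0 < h + r * β := by nlinarith [mul_nonneg hr.le hβ0]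
      have hβ2 : r ^ 2 * β ^ 2 = r ^ 2 - r ^ 2 * α ^ 2 := by
        linear_combination (r ^ 2) * hαβ
      have hcore : d ^ 2 < 4 * (r ^ 2 * α ^ 2) := by
        nlinarith [mul_pos (sub_pos.2 hcase) hpos]
      nlinarith [hcore, hd, mul_nonneg hr.le hα0]
    · -- construct the arc
      obtain ⟨c, hxc⟩ : ∃ c : X, x - c = (d / 2) • u + h • w :=
        ⟨x - ((d / 2) • u + h • w), by abel⟩
      have hyc : y - c = (-(d / 2)) • u + h • w := by
        have h1 : y - c = (x - c) - (x - y) := by abel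
        have h2 : d / 2 - d = -(d / 2) := by ring
        rw [h1, hxc, ← hdu, show (d / 2) • u + h • w - d • u = (d / 2 - d) • u + h • w by
          rw [sub_smul]; abel, h2]
      have hxcn : ‖x - c‖ = r := by
        rw [hxc]
        refine aux_eq_of_sq (norm_nonneg _) hr.le ?_
        rw [hnorm_combo]
        nlinarith [hhsq]
      have hycn : ‖y - c‖ = r := by
        rw [hyc]
        refine aux_eq_of_sq (norm_nonneg _) hr.le ?_
        rw [hnorm_combo]
        nlinarith [hhsq]
      obtain ⟨P, hP_def⟩ : ∃ P : Submodule ℝ X, P = Submodule.span ℝ ({u, w} : Set X) :=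
        ⟨_, rfl⟩
      have huP : u ∈ P := hP_def ▸ Submodule.subset_span (by simp)
      have hwP : w ∈ P := hP_def ▸ Submodule.subset_span (by simp)
      have hwxc : ⟪w, x - c⟫_ℝ = h := by
        rw [hxc, inner_add_right, inner_smul_right, inner_smul_right, hwu,
          real_inner_self_eq_norm_sq, hw]
        ring
      have hshort : IsShortArc r x y
          {z : X | z - c ∈ P ∧ ‖z - c‖ = r ∧ ⟪w, x - c⟫_ℝ ≤ ⟪w, z - c⟫_ℝ} := by
        refine Or.inr ⟨hxyne, c, w, P,
          hP_def ▸ aux_finrank_span_pair u w hu hw huw, ?_, ?_, hwP,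
          norm_ne_zero_iff.1 (by rw [hw]; norm_num), ?_, ?_, hxcn, hycn, rfl⟩
        · rw [hxc]; exact P.add_mem (P.smul_mem _ huP) (P.smul_mem _ hwP)
        · rw [hyc]; exact P.add_mem (P.smul_mem _ huP) (P.smul_mem _ hwP)
        · rw [← hdu, inner_smul_right, hwu, mul_zero]
        · rw [hwxc]; exact hh0
      have hzA : c + r • v ∈
          {z : X | z - c ∈ P ∧ ‖z - c‖ = r ∧ ⟪w, x - c⟫_ℝ ≤ ⟪w, z - c⟫_ℝ} := by
        have hzc : c + r • v - c = r • v := by abel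
        refine ⟨?_, ?_, ?_⟩
        · rw [hzc, hdecomp]
          exact P.smul_mem _ (P.add_mem (P.smul_mem _ huP) (P.smul_mem _ hwP))
        · rw [hzc, norm_smul, Real.norm_eq_abs, hv, abs_of_pos hr, mul_one]
        · rw [hwxc, hzc, inner_smul_right, hwv]
          exact hcase
      have hzΩ : c + r • v ∈ Ω := harc _ hshort hzA
      have hineq := hnormal _ hzΩ
      have h2 : c + r • v - x = r • v - ((d / 2) • u + h • w) := by
        rw [← hxc]; abel
      rw [h2, inner_sub_right, inner_add_right, inner_smul_right, inner_smul_right,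
        inner_smul_right, real_inner_self_eq_norm_sq, hv, hvu, hvw] at hineq
      nlinarith [sq_nonneg (α * h - β * (d / 2)), sq_nonneg (α * (d / 2) + β * h - r),
        mul_nonneg hα0 hh0, mul_nonneg hβ0 hd.le]
  -- conclude
  simp only [mem_closedBall, dist_eq_norm]
  have hyx : y - (x - r • v) = (r * α - d) • u + (r * β) • w := by
    rw [hdecomp, smul_add, smul_smul, smul_smul,
      show (r * α - d) • u = (r * α) • u - d • u by rw [sub_smul], hdu]
    abel
  rw [hyx]
  have hsq := hnorm_combo (r * α - d) (r * β)
  have hle : ‖(r * α - d) • u + (r * β) • w‖ ^ 2 ≤ r ^ 2 := by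
    rw [hsq]
    nlinarith [hαβ, key, hd, hr]
  nlinarith [hle, norm_nonneg ((r * α - d) • u + (r * β) • w), hr]
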